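/- Let W : ℝ^N × ℝⁿ → ℝⁿ and suppose there is L ≥ 0 such that |W(s,y) − W(s,y')| ≤ L·|s|·|y − y'| for all s ∈ ℝ^N and y, y' ∈ ℝⁿ. Fix t ∈ ℝ^N and suppose ω₁, ω₂ : [0,1] → ℝⁿ are continuous, satisfy ω₁(0) = ω₂(0), and for every ε ∈ (0,1] each ωᵢ is differentiable at ε with ωᵢ'(ε) = (1/ε)·W(εt, ωᵢ(ε)). Then ω₁(ε) = ω₂(ε) for all ε ∈ [0,1]. -/

import Mathlib

open Set

/-- uniqueness for the singular ODE `ω'(ε) = (1/ε) W(εt, ω(ε))` on `[0,1]`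
under the Lipschitz bound `|W(s,y) − W(s,y')| ≤ L |s| |y − y'|`. -/
theorem stmt_1 (N n : ℕ)
    (W : EuclideanSpace ℝ (Fin N) → EuclideanSpace ℝ (Fin n) → EuclideanSpace ℝ (Fin n))
    (L : ℝ) (hL : 0 ≤ L)
    (hLip : ∀ s y y', ‖W s y - W s y'‖ ≤ L * ‖s‖ * ‖y - y'‖)
    (t : EuclideanSpace ℝ (Fin N))
    (ω₁ ω₂ : ℝ → EuclideanSpace ℝ (Fin n))
    (hc₁ : ContinuousOn ω₁ (Icc 0 1)) (hc₂ : ContinuousOn ω₂ (Icc 0 1))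
    (h0 : ω₁ 0 = ω₂ 0)
    (hd₁ : ∀ ε ∈ Ioc (0:ℝ) 1,
      HasDerivWithinAt ω₁ (ε⁻¹ • W (ε • t) (ω₁ ε)) (Icc 0 1) ε)
    (hd₂ : ∀ ε ∈ Ioc (0:ℝ) 1,
      HasDerivWithinAt ω₂ (ε⁻¹ • W (ε • t) (ω₂ ε)) (Icc 0 1) ε) :
    ∀ ε ∈ Icc (0:ℝ) 1, ω₁ ε = ω₂ ε := by
  set f : ℝ → EuclideanSpace ℝ (Fin n) := fun x => ω₁ x - ω₂ x with hf
  set K : ℝ := L * ‖t‖ with hK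
  have hK0 : 0 ≤ K := mul_nonneg hL (norm_nonneg t)
  have hcf : ContinuousOn f (Icc 0 1) := hc₁.sub hc₂
  -- Grönwall on [a,1] for 0 < a
  have key : ∀ a ∈ Ioc (0:ℝ) 1, ∀ ε ∈ Icc a 1, ‖f ε‖ ≤ ‖f a‖ * Real.exp K := by
    intro a ha ε hε
    have hsub : Icc a 1 ⊆ Icc (0:ℝ) 1 := Icc_subset_Icc ha.1.le le_rfl
    have hb := norm_le_gronwallBound_of_norm_deriv_right_le
      (f := f) (f' := fun x => x⁻¹ • (W (x • t) (ω₁ x) - W (x • t) (ω₂ x)))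
      (δ := ‖f a‖) (K := K) (ε := 0) (a := a) (b := 1)
      (hcf.mono hsub) ?_ le_rfl ?_ ε hε
    · rw [gronwallBound_ε0] at hb
      refine hb.trans (mul_le_mul_of_nonneg_left ?_ (norm_nonneg _))
      exact Real.exp_le_exp.2 (by nlinarith [hε.1, hε.2, ha.1])
    · intro x hx
      have hx01 : x ∈ Ioc (0:ℝ) 1 := ⟨lt_of_lt_of_le ha.1 hx.1, hx.2.le⟩
      have hmem : Icc (0:ℝ) 1 ∈ nhdsWithin x (Ici x) :=
        Filter.mem_of_superset (Icc_mem_nhdsGE_of_mem ⟨le_rfl, hx.2⟩)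
          (Icc_subset_Icc hx01.1.le le_rfl)
      have h1 := (hd₁ x hx01).mono_of_mem_nhdsWithin hmem
      have h2 := (hd₂ x hx01).mono_of_mem_nhdsWithin hmem
      have := h1.sub h2
      rw [smul_sub]; exact this
    · intro x hx
      have hx0 : (0:ℝ) < x := lt_of_lt_of_le ha.1 hx.1
      have := hLip (x • t) (ω₁ x) (ω₂ x)
      have hns : ‖x • t‖ = x * ‖t‖ := by
        rw [norm_smul, Real.norm_eq_abs, abs_of_pos hx0]
      calc ‖x⁻¹ • (W (x • t) (ω₁ x) - W (x • t) (ω₂ x))‖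
          = x⁻¹ * ‖W (x • t) (ω₁ x) - W (x • t) (ω₂ x)‖ := by
            rw [norm_smul, Real.norm_eq_abs, abs_of_pos (inv_pos.2 hx0)]
        _ ≤ x⁻¹ * (L * ‖x • t‖ * ‖ω₁ x - ω₂ x‖) :=
            mul_le_mul_of_nonneg_left (hLip _ _ _) (inv_nonneg.2 hx0.le)
        _ = K * ‖f x‖ + 0 := by
            rw [hns, hK]
            simp only [f]
            field_simp
            ring
  -- limit a → 0⁺
  have hzero : ∀ ε ∈ Ioc (0:ℝ) 1, ‖f ε‖ ≤ 0 := by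
    intro ε hε
    by_contra h
    push_neg at h
    have hcont : Filter.Tendsto (fun a => ‖f a‖) (nhdsWithin 0 (Icc 0 1)) (nhds 0) := by
      have := (hcf 0 ⟨le_rfl, zero_le_one⟩).norm
      simpa [f, h0] using this.tendsto
    have hε' : (0:ℝ) < ‖f ε‖ / Real.exp K := div_pos h (Real.exp_pos K)
    have hev : ∀ᶠ a in nhdsWithin 0 (Icc 0 1), ‖f a‖ < ‖f ε‖ / Real.exp K :=
      hcont.eventually (Filter.Tendsto.eventually_lt_const hε' Filter.tendsto_id) |>.mono (fun a ha => ha)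
    have hle : nhdsWithin (0:ℝ) (Ioc 0 ε) ≤ nhdsWithin 0 (Icc 0 1) :=
      nhdsWithin_mono _ (Ioc_subset_Icc_self.trans (Icc_subset_Icc le_rfl hε.2))
    have hne : (nhdsWithin (0:ℝ) (Ioc 0 ε)).NeBot := left_nhdsWithin_Ioc_neBot hε.1
    obtain ⟨a, halt, haI⟩ :=
      ((hev.filter_mono hle).and eventually_mem_nhdsWithin).exists
    have := key a ⟨haI.1, haI.2.trans hε.2⟩ ε ⟨haI.2, hε.2⟩
    have h3 : ‖f a‖ * Real.exp K < ‖f ε‖ := (lt_div_iff₀ (Real.exp_pos K)).1 halt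
    linarith
  intro ε hε
  rcases eq_or_lt_of_le hε.1 with h | h
  · rw [← h]; exact h0
  · have h1 := hzero ε ⟨h, hε.2⟩
    have h2 : f ε = 0 := norm_eq_zero.1 (le_antisymm h1 (norm_nonneg _))
    exact sub_eq_zero.1 h2
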